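/- If every graph in a class closed under edge deletion with the property 'K3-free, maximum degree at most 4, and no edge joins two vertices of degree at least 3' is considered, then any minimal non-edge-partitionable counterexample G in this class has every edge adjacent to at least 3 other edges; in particular, every edge of G is incident to a vertex of degree at least 3. -/

import Mathlib

open SimpleGraph

variable {V : Type*}

/-- A graph is a star forest iff it has no path on four vertices as a subgraph and
no triangle: every connected component is a star. -/
def IsStarForest {W : Type*} (H : SimpleGraph W) : Prop :=
  (∀ a b c d : W, H.Adj a b → H.Adj b c → H.Adj c d → a = c ∨ b = d ∨ a = d) ∧
    H.CliqueFree 3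

/-- A graph is edge-partitionable if its edges can be coloured red and blue so that
the blue edges form a star forest and every vertex is incident to at most two
red edges. -/
def EdgePartitionable {W : Type*} (G : SimpleGraph W) : Prop :=
  ∃ Bl : SimpleGraph W, Bl ≤ G ∧ IsStarForest Bl ∧
    ∀ v, {u | G.Adj v u ∧ ¬Bl.Adj v u}.ncard ≤ 2

/-- The class: triangle-free graphs of maximum degree at most `4` in which no edge
joins two vertices of degree at least `3`. -/
def InClass (G : SimpleGraph V) : Prop :=
  G.CliqueFree 3 ∧ (∀ v, (G.neighborSet v).ncard ≤ 4) ∧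
    ∀ u v, G.Adj u v → (G.neighborSet u).ncard ≤ 2 ∨ (G.neighborSet v).ncard ≤ 2

lemma del_adj (G : SimpleGraph V) (s : Set (Sym2 V)) (a b : V) :
    (G.deleteEdges s).Adj a b ↔ G.Adj a b ∧ s(a, b) ∉ s := by
  constructor
  · intro h
    simp only [deleteEdges, sdiff_adj, fromEdgeSet_adj] at h
    exact ⟨h.1, fun hm => h.2 ⟨hm, h.1.ne⟩⟩
  · intro ⟨h1, h2⟩
    simp only [deleteEdges, sdiff_adj, fromEdgeSet_adj]
    exact ⟨h1, fun hc => h2 hc.1⟩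

lemma count_eq [Fintype V] (G : SimpleGraph V) {u v : V} (huv : G.Adj u v) :
    {e ∈ G.edgeSet | e ≠ s(u, v) ∧ (u ∈ e ∨ v ∈ e)}.ncard
      = ((G.neighborSet u).ncard - 1) + ((G.neighborSet v).ncard - 1) := by
  have hset : {e ∈ G.edgeSet | e ≠ s(u, v) ∧ (u ∈ e ∨ v ∈ e)}
      = (fun x => s(u, x)) '' (G.neighborSet u \ {v})
        ∪ (fun x => s(v, x)) '' (G.neighborSet v \ {u}) := by
    ext e
    induction e using Sym2.ind with
    | _ a b =>
      simp only [Set.mem_setOf_eq, Set.mem_union, Set.mem_image, Set.mem_diff,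
        Set.mem_singleton_iff, mem_edgeSet, Sym2.mem_iff, mem_neighborSet]
      constructor
      · rintro ⟨hab, hne, h | h⟩
        · rcases h with rfl | rfl
          · exact Or.inl ⟨b, ⟨hab, fun hb => hne (by rw [hb])⟩, rfl⟩
          · exact Or.inl ⟨a, ⟨hab.symm, fun ha => hne (by rw [ha]; exact Sym2.eq_swap)⟩,
              Sym2.eq_swap⟩
        · rcases h with rfl | rfl
          · exact Or.inr ⟨b, ⟨hab, fun hb => hne (by rw [hb]; exact Sym2.eq_swap)⟩, rfl⟩
          · exact Or.inr ⟨a, ⟨hab.symm, fun ha => hne (by rw [ha])⟩, Sym2.eq_swap⟩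
      · rintro (⟨x, ⟨hx, hxv⟩, he⟩ | ⟨x, ⟨hx, hxu⟩, he⟩)
        · rw [Sym2.eq_iff] at he
          rcases he with ⟨rfl, rfl⟩ | ⟨rfl, rfl⟩
          · refine ⟨hx, fun hc => ?_, Or.inl (Or.inl rfl)⟩
            rw [Sym2.eq_iff] at hc
            rcases hc with ⟨h1, h2⟩ | ⟨h1, h2⟩
            · exact hxv h2
            · exact huv.ne h1
          · refine ⟨hx.symm, fun hc => ?_, Or.inl (Or.inr rfl)⟩
            rw [Sym2.eq_iff] at hc
            rcases hc with ⟨h1, h2⟩ | ⟨h1, h2⟩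
            · exact huv.ne h2
            · exact hxv h1
        · rw [Sym2.eq_iff] at he
          rcases he with ⟨rfl, rfl⟩ | ⟨rfl, rfl⟩
          · refine ⟨hx, fun hc => ?_, Or.inr (Or.inl rfl)⟩
            rw [Sym2.eq_iff] at hc
            rcases hc with ⟨h1, h2⟩ | ⟨h1, h2⟩
            · exact huv.ne h1.symm
            · exact hxu h2
          · refine ⟨hx.symm, fun hc => ?_, Or.inr (Or.inr rfl)⟩
            rw [Sym2.eq_iff] at hc
            rcases hc with ⟨h1, h2⟩ | ⟨h1, h2⟩
            · exact hxu h1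
            · exact huv.ne h2.symm
  have hdisj : Disjoint ((fun x => s(u, x)) '' (G.neighborSet u \ {v}))
      ((fun x => s(v, x)) '' (G.neighborSet v \ {u})) := by
    rw [Set.disjoint_left]
    rintro e ⟨x, ⟨hx, hxv⟩, rfl⟩ ⟨y, ⟨hy, hyu⟩, he⟩
    rw [Sym2.eq_iff] at he
    rcases he with ⟨h1, h2⟩ | ⟨h1, h2⟩ <;> subst_vars <;> simp_all
  have hinj : ∀ w : V, Function.Injective (fun x : V => s(w, x)) :=
    fun w x y h => Sym2.congr_right.mp h
  rw [hset, Set.ncard_union_eq hdisj (Set.toFinite _) (Set.toFinite _),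
    Set.ncard_image_of_injective _ (hinj u), Set.ncard_image_of_injective _ (hinj v),
    Set.ncard_diff_singleton_of_mem (show v ∈ G.neighborSet u from huv),
    Set.ncard_diff_singleton_of_mem (show u ∈ G.neighborSet v from huv.symm)]

/-- Extension by colouring the deleted edge red. -/
lemma red_ext [Fintype V] (G : SimpleGraph V) {u v : V} (huv : G.Adj u v)
    (Bl : SimpleGraph V) (hBl_le : Bl ≤ G.deleteEdges {s(u, v)})
    (hSF : IsStarForest Bl)
    (hred : ∀ w, {x | (G.deleteEdges {s(u, v)}).Adj w x ∧ ¬Bl.Adj w x}.ncard ≤ 2)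
    (hru : {x | (G.deleteEdges {s(u, v)}).Adj u x ∧ ¬Bl.Adj u x}.ncard ≤ 1)
    (hrv : {x | (G.deleteEdges {s(u, v)}).Adj v x ∧ ¬Bl.Adj v x}.ncard ≤ 1) :
    EdgePartitionable G := by
  refine ⟨Bl, le_trans hBl_le (G.deleteEdges_le _), hSF, ?_⟩
  intro w
  by_cases hwu : w = u
  · subst hwu
    have hsub : {x | G.Adj w x ∧ ¬Bl.Adj w x}
        ⊆ insert v {x | (G.deleteEdges {s(w, v)}).Adj w x ∧ ¬Bl.Adj w x} := by
      rintro x ⟨h1, h2⟩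
      by_cases hxv : x = v
      · exact hxv ▸ Set.mem_insert _ _
      · refine Set.mem_insert_of_mem _ ⟨(del_adj G _ w x).mpr ⟨h1, ?_⟩, h2⟩
        simp only [Set.mem_singleton_iff]
        exact fun hc => hxv (Sym2.congr_right.mp hc)
    calc {x | G.Adj w x ∧ ¬Bl.Adj w x}.ncard
        ≤ (insert v {x | (G.deleteEdges {s(w, v)}).Adj w x ∧ ¬Bl.Adj w x}).ncard :=
          Set.ncard_le_ncard hsub (Set.toFinite _)
      _ ≤ {x | (G.deleteEdges {s(w, v)}).Adj w x ∧ ¬Bl.Adj w x}.ncard + 1 :=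
          Set.ncard_insert_le _ _
      _ ≤ 2 := by omega
  · by_cases hwv : w = v
    · subst hwv
      have hsub : {x | G.Adj w x ∧ ¬Bl.Adj w x}
          ⊆ insert u {x | (G.deleteEdges {s(u, w)}).Adj w x ∧ ¬Bl.Adj w x} := by
        rintro x ⟨h1, h2⟩
        by_cases hxu : x = u
        · exact hxu ▸ Set.mem_insert _ _
        · refine Set.mem_insert_of_mem _ ⟨(del_adj G _ w x).mpr ⟨h1, ?_⟩, h2⟩
          simp only [Set.mem_singleton_iff]
          intro hc
          rw [Sym2.eq_iff] at hc
          rcases hc with ⟨h3, h4⟩ | ⟨h3, h4⟩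
          · exact huv.ne h3.symm
          · exact hxu h4
      calc {x | G.Adj w x ∧ ¬Bl.Adj w x}.ncard
          ≤ (insert u {x | (G.deleteEdges {s(u, w)}).Adj w x ∧ ¬Bl.Adj w x}).ncard :=
            Set.ncard_le_ncard hsub (Set.toFinite _)
        _ ≤ {x | (G.deleteEdges {s(u, w)}).Adj w x ∧ ¬Bl.Adj w x}.ncard + 1 :=
            Set.ncard_insert_le _ _
        _ ≤ 2 := by omega
    · refine le_trans (Set.ncard_le_ncard ?_ (Set.toFinite _)) (hred w)
      rintro x ⟨h1, h2⟩
      refine ⟨(del_adj G _ w x).mpr ⟨h1, ?_⟩, h2⟩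
      simp only [Set.mem_singleton_iff]
      intro hc
      rw [Sym2.eq_iff] at hc
      rcases hc with ⟨h3, h4⟩ | ⟨h3, h4⟩
      · exact hwu h3
      · exact hwv h3

/-- Extension by colouring the deleted edge blue, when `v` is a pendant vertex and
the blue graph has no edge at `u`. -/
lemma blue_ext [Fintype V] (G : SimpleGraph V) {u v : V} (huv : G.Adj u v)
    (hclique : G.CliqueFree 3)
    (hNv : G.neighborSet v = {u})
    (Bl : SimpleGraph V) (hBl_le : Bl ≤ G.deleteEdges {s(u, v)})
    (hSF : IsStarForest Bl)
    (hred : ∀ w, {x | (G.deleteEdges {s(u, v)}).Adj w x ∧ ¬Bl.Adj w x}.ncard ≤ 2)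
    (hBu : ∀ x, ¬Bl.Adj u x) :
    EdgePartitionable G := by
  set BL : SimpleGraph V := Bl ⊔ fromEdgeSet {s(u, v)} with hBL
  have hBLadj : ∀ a b, BL.Adj a b ↔ Bl.Adj a b ∨ s(a, b) = s(u, v) := by
    intro a b
    rw [hBL, sup_adj, fromEdgeSet_adj, Set.mem_singleton_iff]
    constructor
    · rintro (h | ⟨h, _⟩)
      · exact Or.inl h
      · exact Or.inr h
    · rintro (h | h)
      · exact Or.inl h
      · refine Or.inr ⟨h, ?_⟩
        rw [Sym2.eq_iff] at h
        rcases h with ⟨rfl, rfl⟩ | ⟨rfl, rfl⟩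
        · exact huv.ne
        · exact huv.ne'
  have hBv : ∀ x, ¬Bl.Adj v x := by
    intro x hx
    have h1 := (del_adj G _ v x).mp (hBl_le hx)
    have h2 : x ∈ G.neighborSet v := h1.1
    rw [hNv, Set.mem_singleton_iff] at h2
    subst h2
    exact h1.2 (by rw [Set.mem_singleton_iff]; exact Sym2.eq_swap)
  have hBle : Bl ≤ G := le_trans hBl_le (G.deleteEdges_le _)
  have hBL_le : BL ≤ G := by
    intro a b hab
    rcases (hBLadj a b).mp hab with h | h
    · exact hBle h
    · rw [Sym2.eq_iff] at h
      rcases h with ⟨rfl, rfl⟩ | ⟨rfl, rfl⟩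
      · exact huv
      · exact huv.symm
  have hBLu : ∀ x, BL.Adj u x → x = v := by
    intro x hx
    rcases (hBLadj u x).mp hx with h | h
    · exact absurd h (hBu x)
    · rw [Sym2.eq_iff] at h
      rcases h with ⟨h1, h2⟩ | ⟨h1, h2⟩
      · exact h2
      · exact absurd h1 huv.ne
  have hBLv : ∀ x, BL.Adj v x → x = u := by
    intro x hx
    rcases (hBLadj v x).mp hx with h | h
    · exact absurd h (hBv x)
    · rw [Sym2.eq_iff] at h
      rcases h with ⟨h1, h2⟩ | ⟨h1, h2⟩
      · exact absurd h1.symm huv.ne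
      · exact h2
  refine ⟨BL, hBL_le, ⟨?_, hclique.anti hBL_le⟩, ?_⟩
  · intro a b c d hab hbc hcd
    by_cases hb : b = u ∨ b = v
    · rcases hb with rfl | rfl
      · exact Or.inl ((hBLu a hab.symm).trans (hBLu c hbc).symm)
      · exact Or.inl ((hBLv a hab.symm).trans (hBLv c hbc).symm)
    · by_cases hc : c = u ∨ c = v
      · rcases hc with rfl | rfl
        · exact Or.inr (Or.inl ((hBLu b hbc.symm).trans (hBLu d hcd).symm))
        · exact Or.inr (Or.inl ((hBLv b hbc.symm).trans (hBLv d hcd).symm))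
      · push_neg at hb hc
        have hab' : Bl.Adj a b := by
          rcases (hBLadj a b).mp hab with h | h
          · exact h
          · rw [Sym2.eq_iff] at h
            rcases h with ⟨h1, h2⟩ | ⟨h1, h2⟩
            · exact absurd h2 hb.2
            · exact absurd h2 hb.1
        have hbc' : Bl.Adj b c := by
          rcases (hBLadj b c).mp hbc with h | h
          · exact h
          · rw [Sym2.eq_iff] at h
            rcases h with ⟨h1, h2⟩ | ⟨h1, h2⟩
            · exact absurd h1 hb.1
            · exact absurd h1 hb.2
        have hcd' : Bl.Adj c d := by
          rcases (hBLadj c d).mp hcd with h | h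
          · exact h
          · rw [Sym2.eq_iff] at h
            rcases h with ⟨h1, h2⟩ | ⟨h1, h2⟩
            · exact absurd h1 hc.1
            · exact absurd h1 hc.2
        exact hSF.1 a b c d hab' hbc' hcd'
  · intro w
    by_cases hwv : w = v
    · subst hwv
      have : {x | G.Adj w x ∧ ¬BL.Adj w x} = ∅ := by
        ext x
        simp only [Set.mem_setOf_eq, Set.mem_empty_iff_false, iff_false, not_and, not_not]
        intro hx
        have h2 : x ∈ G.neighborSet w := hx
        rw [hNv, Set.mem_singleton_iff] at h2
        subst h2
        exact (hBLadj w x).mpr (Or.inr Sym2.eq_swap)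
      rw [this]
      simp
    · refine le_trans (Set.ncard_le_ncard ?_ (Set.toFinite _)) (hred w)
      rintro x ⟨h1, h2⟩
      refine ⟨(del_adj G _ w x).mpr ⟨h1, ?_⟩, fun hc => h2 ((hBLadj w x).mpr (Or.inl hc))⟩
      rw [Set.mem_singleton_iff]
      exact fun hc => h2 ((hBLadj w x).mpr (Or.inr hc))

theorem stmt19 [Fintype V] (G : SimpleGraph V)
    (hG : InClass G) (hnot : ¬EdgePartitionable G)
    (hmin : ∀ H : SimpleGraph V, InClass H →
      H.edgeSet.ncard < G.edgeSet.ncard → EdgePartitionable H) :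
    (∀ u v, G.Adj u v →
      3 ≤ {e ∈ G.edgeSet | e ≠ s(u, v) ∧ (u ∈ e ∨ v ∈ e)}.ncard) ∧
    (∀ u v, G.Adj u v →
      3 ≤ (G.neighborSet u).ncard ∨ 3 ≤ (G.neighborSet v).ncard) := by
  have key : ∀ u v, G.Adj u v →
      3 ≤ {e ∈ G.edgeSet | e ≠ s(u, v) ∧ (u ∈ e ∨ v ∈ e)}.ncard := by
    intro u v huv
    by_contra hA
    push_neg at hA
    rw [count_eq G huv] at hA
    have hA' : (G.neighborSet u).ncard - 1 + ((G.neighborSet v).ncard - 1) ≤ 2 := by omega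
    have hdu : 1 ≤ (G.neighborSet u).ncard :=
      Set.ncard_pos (Set.toFinite _) |>.mpr ⟨v, huv⟩
    have hdv : 1 ≤ (G.neighborSet v).ncard :=
      Set.ncard_pos (Set.toFinite _) |>.mpr ⟨u, huv.symm⟩
    set G' := G.deleteEdges {s(u, v)} with hG'def
    have hle : G' ≤ G := G.deleteEdges_le _
    have hclass' : InClass G' := by
      obtain ⟨hc1, hc2, hc3⟩ := hG
      refine ⟨hc1.anti hle, fun w => le_trans (Set.ncard_le_ncard (fun x hx => hle hx)
        (Set.toFinite _)) (hc2 w), fun a b hab => ?_⟩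
      rcases hc3 a b (hle hab) with h | h
      · exact Or.inl (le_trans (Set.ncard_le_ncard (fun x hx => hle hx) (Set.toFinite _)) h)
      · exact Or.inr (le_trans (Set.ncard_le_ncard (fun x hx => hle hx) (Set.toFinite _)) h)
    have hcard : G'.edgeSet.ncard < G.edgeSet.ncard := by
      rw [hG'def, edgeSet_deleteEdges]
      exact Set.ncard_diff_singleton_lt_of_mem (G.mem_edgeSet.mpr huv) (Set.toFinite _)
    obtain ⟨Bl, hBl_le, hSF, hred⟩ := hmin G' hclass' hcard
    -- bounds on red degrees at u and v in G'
    have hsubu : {x | G'.Adj u x ∧ ¬Bl.Adj u x} ⊆ G.neighborSet u \ {v} := by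
      rintro x ⟨h1, _⟩
      have h2 := (del_adj G _ u x).mp h1
      refine ⟨h2.1, ?_⟩
      rw [Set.mem_singleton_iff]
      intro hx
      exact h2.2 (by rw [Set.mem_singleton_iff, hx])
    have hsubv : {x | G'.Adj v x ∧ ¬Bl.Adj v x} ⊆ G.neighborSet v \ {u} := by
      rintro x ⟨h1, _⟩
      have h2 := (del_adj G _ v x).mp h1
      refine ⟨h2.1, ?_⟩
      rw [Set.mem_singleton_iff]
      intro hx
      exact h2.2 (by rw [Set.mem_singleton_iff, hx]; exact Sym2.eq_swap)
    have hbu : {x | G'.Adj u x ∧ ¬Bl.Adj u x}.ncard ≤ (G.neighborSet u).ncard - 1 := by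
      refine le_trans (Set.ncard_le_ncard hsubu (Set.toFinite _)) ?_
      rw [Set.ncard_diff_singleton_of_mem (show v ∈ G.neighborSet u from huv)]
    have hbv : {x | G'.Adj v x ∧ ¬Bl.Adj v x}.ncard ≤ (G.neighborSet v).ncard - 1 := by
      refine le_trans (Set.ncard_le_ncard hsubv (Set.toFinite _)) ?_
      rw [Set.ncard_diff_singleton_of_mem (show u ∈ G.neighborSet v from huv.symm)]
    by_cases hcase : {x | G'.Adj u x ∧ ¬Bl.Adj u x}.ncard ≤ 1
      ∧ {x | G'.Adj v x ∧ ¬Bl.Adj v x}.ncard ≤ 1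
    · exact hnot (red_ext G huv Bl hBl_le hSF hred hcase.1 hcase.2)
    · rw [not_and_or] at hcase
      push_neg at hcase
      rcases hcase with hbig | hbig
      · -- red degree at u is 2, so deg u = 3, deg v = 1
        have hdu3 : (G.neighborSet u).ncard - 1 = 2 := by omega
        have hdv1 : (G.neighborSet v).ncard = 1 := by omega
        have hNv : G.neighborSet v = {u} := by
          obtain ⟨a, ha⟩ := Set.ncard_eq_one.mp hdv1
          have : u ∈ G.neighborSet v := huv.symm
          rw [ha, Set.mem_singleton_iff] at this
          rw [ha, this]
        have hr2 : {x | G'.Adj u x ∧ ¬Bl.Adj u x} = G.neighborSet u \ {v} := by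
          apply Set.eq_of_subset_of_ncard_le hsubu _ (Set.toFinite _)
          rw [Set.ncard_diff_singleton_of_mem (show v ∈ G.neighborSet u from huv), hdu3]
          omega
        have hBu : ∀ x, ¬Bl.Adj u x := by
          intro x hx
          have h1 := (del_adj G _ u x).mp (hBl_le hx)
          have hmem : x ∈ G.neighborSet u \ {v} := by
            refine ⟨h1.1, fun hs => h1.2 ?_⟩
            rw [Set.mem_singleton_iff] at hs ⊢
            rw [hs]
          rw [← hr2] at hmem
          exact hmem.2 hx
        exact hnot (blue_ext G huv hG.1 hNv Bl hBl_le hSF hred hBu)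
      · -- symmetric case: red degree at v is 2
        have hdv3 : (G.neighborSet v).ncard - 1 = 2 := by omega
        have hdu1 : (G.neighborSet u).ncard = 1 := by omega
        have hNu : G.neighborSet u = {v} := by
          obtain ⟨a, ha⟩ := Set.ncard_eq_one.mp hdu1
          have : v ∈ G.neighborSet u := huv
          rw [ha, Set.mem_singleton_iff] at this
          rw [ha, this]
        have hr2 : {x | G'.Adj v x ∧ ¬Bl.Adj v x} = G.neighborSet v \ {u} := by
          apply Set.eq_of_subset_of_ncard_le hsubv _ (Set.toFinite _)
          rw [Set.ncard_diff_singleton_of_mem (show u ∈ G.neighborSet v from huv.symm), hdv3]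
          omega
        have hBv : ∀ x, ¬Bl.Adj v x := by
          intro x hx
          have h1 := (del_adj G _ v x).mp (hBl_le hx)
          have hmem : x ∈ G.neighborSet v \ {u} := by
            refine ⟨h1.1, fun hs => h1.2 ?_⟩
            rw [Set.mem_singleton_iff] at hs ⊢
            rw [hs]
            exact Sym2.eq_swap
          rw [← hr2] at hmem
          exact hmem.2 hx
        have hswap : ({s(v, u)} : Set (Sym2 V)) = {s(u, v)} := by rw [Sym2.eq_swap]
        have hBl_le' : Bl ≤ G.deleteEdges {s(v, u)} := by rw [hswap]; exact hBl_le
        have hred' : ∀ w, {x | (G.deleteEdges {s(v, u)}).Adj w x ∧ ¬Bl.Adj w x}.ncard ≤ 2 := by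
          rw [hswap]; exact hred
        exact hnot (blue_ext G huv.symm hG.1 hNu Bl hBl_le' hSF hred' hBv)
  refine ⟨key, fun u v huv => ?_⟩
  have h3 := key u v huv
  rw [count_eq G huv] at h3
  have hdu : 1 ≤ (G.neighborSet u).ncard :=
    Set.ncard_pos (Set.toFinite _) |>.mpr ⟨v, huv⟩
  have hdv : 1 ≤ (G.neighborSet v).ncard :=
    Set.ncard_pos (Set.toFinite _) |>.mpr ⟨u, huv.symm⟩
  omega
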